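/- With admissible projectors Q₀, ..., Q_{ν−1}, for ν ≥ j > k the image of Q_k P_{k+1} ⋯ P_j equals N_k = im Q_k, and its kernel equals N₀ ⊕ ⋯ ⊕ N_{k−1} ⊕ N_{k+1} ⊕ ⋯ ⊕ N_j ⊕ im Π_j. -/

import Mathlib

noncomputable def piProd {m : ℕ} (Q : ℕ → Module.End ℝ (Fin m → ℝ)) (k : ℕ) :
    Module.End ℝ (Fin m → ℝ) :=
  ((List.range (k + 1)).map (fun i => 1 - Q i)).prod

/-- `Π_{k-1}` with the convention `Π_{-1} = 1`. -/
noncomputable def piPred {m : ℕ} (Q : ℕ → Module.End ℝ (Fin m → ℝ)) (k : ℕ) :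
    Module.End ℝ (Fin m → ℝ) :=
  if k = 0 then 1 else piProd Q (k - 1)

/-- ascending product `P_a * P_(a+1) * ... * P_b` (empty product `1` if `b < a`). -/
noncomputable def ascProd {m : ℕ} (Q : ℕ → Module.End ℝ (Fin m → ℝ)) (a b : ℕ) :
    Module.End ℝ (Fin m → ℝ) :=
  ((List.range (b + 1 - a)).map (fun t => 1 - Q (a + t))).prod

section aux
variable {m : ℕ} (Q : ℕ → Module.End ℝ (Fin m → ℝ))

lemma prodP_mul_Q (l : List ℕ) (i : ℕ) (h : ∀ t ∈ l, Q t * Q i = 0) :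
    (l.map (fun t => 1 - Q t)).prod * Q i = Q i := by
  induction l with
  | nil => simp
  | cons a l ih =>
    rw [List.map_cons, List.prod_cons, mul_assoc,
      ih (fun t ht => h t (List.mem_cons_of_mem _ ht)),
      sub_mul, one_mul, h a (List.mem_cons_self), sub_zero]

lemma mul_prodP (T : Module.End ℝ (Fin m → ℝ)) (l : List ℕ) (h : ∀ t ∈ l, T * Q t = 0) :
    T * (l.map (fun t => 1 - Q t)).prod = T := by
  induction l with
  | nil => simp
  | cons a l ih =>
    rw [List.map_cons, List.prod_cons, ← mul_assoc, mul_sub, mul_one,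
      h a (List.mem_cons_self), sub_zero,
      ih (fun t ht => h t (List.mem_cons_of_mem _ ht))]

lemma ascProd_eq_prodP (a b : ℕ) :
    ascProd Q a b = (((List.range (b + 1 - a)).map (a + ·)).map (fun t => 1 - Q t)).prod := by
  rw [List.map_map]; rfl

lemma ascProd_split (a c b : ℕ) (h1 : a ≤ c + 1) (h2 : c ≤ b) :
    ascProd Q a b = ascProd Q a c * ascProd Q (c + 1) b := by
  have e : b + 1 - a = (c + 1 - a) + (b - c) := by omega
  have e2 : b + 1 - (c + 1) = b - c := by omega
  unfold ascProd
  rw [e, e2, List.range_add, List.map_append, List.prod_append, List.map_map]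
  congr 2
  refine List.map_congr_left (fun t ht => ?_)
  simp only [Function.comp_apply]
  have : a + (c + 1 - a + t) = c + 1 + t := by omega
  rw [this]

lemma ascProd_last (a i : ℕ) (hai : a ≤ i) :
    ascProd Q a i = ((List.range (i - a)).map (fun t => 1 - Q (a + t))).prod * (1 - Q i) := by
  have e : i + 1 - a = (i - a) + 1 := by omega
  have e3 : a + (i - a) = i := by omega
  unfold ascProd
  rw [e, List.range_succ, List.map_append, List.prod_append,
    List.map_singleton, List.prod_singleton, e3]

/-- absorption: all factors of `ascProd Q a b` annihilate `Q i` from the left. -/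
lemma ascProd_mul_Q (a b i : ℕ) (h : ∀ t, a ≤ t → t ≤ b → Q t * Q i = 0) :
    ascProd Q a b * Q i = Q i := by
  rw [ascProd_eq_prodP]
  refine prodP_mul_Q Q _ i (fun t ht => ?_)
  simp only [List.mem_map, List.mem_range] at ht
  obtain ⟨s, hs, rfl⟩ := ht
  exact h _ (by omega) (by omega)

/-- kill: `ascProd Q a b * Q i = 0` when `a ≤ i ≤ b`. -/
lemma ascProd_mul_Q_eq_zero (a b i : ℕ) (hai : a ≤ i) (hib : i ≤ b)
    (hQ : Q i * Q i = Q i) (h : ∀ t, i < t → t ≤ b → Q t * Q i = 0) :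
    ascProd Q a b * Q i = 0 := by
  rw [ascProd_split Q a i b (by omega) hib, mul_assoc,
    ascProd_mul_Q Q (i + 1) b i (fun t h1 h2 => h t (by omega) h2),
    ascProd_last Q a i hai, mul_assoc, sub_mul, one_mul, hQ, sub_self, mul_zero]

lemma mul_ascProd (T : Module.End ℝ (Fin m → ℝ)) (a b : ℕ)
    (h : ∀ t, a ≤ t → t ≤ b → T * Q t = 0) : T * ascProd Q a b = T := by
  rw [ascProd_eq_prodP]
  refine mul_prodP Q T _ (fun t ht => ?_)
  simp only [List.mem_map, List.mem_range] at ht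
  obtain ⟨s, hs, rfl⟩ := ht
  exact h _ (by omega) (by omega)

lemma sub_prodP_mem (S : Submodule ℝ (Fin m → ℝ)) (l : List ℕ)
    (h : ∀ i ∈ l, LinearMap.range (Q i) ≤ S) (x : Fin m → ℝ) :
    x - ((l.map (fun t => 1 - Q t)).prod) x ∈ S := by
  induction l with
  | nil => simp
  | cons a l ih =>
    have h1 : x - ((l.map (fun t => 1 - Q t)).prod) x ∈ S :=
      ih (fun t ht => h t (List.mem_cons_of_mem _ ht))
    have h2 : Q a (((l.map (fun t => 1 - Q t)).prod) x) ∈ S :=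
      h a (List.mem_cons_self) ⟨_, rfl⟩
    have e : x - (((a :: l).map (fun t => 1 - Q t)).prod) x
        = (x - ((l.map (fun t => 1 - Q t)).prod) x)
          + Q a (((l.map (fun t => 1 - Q t)).prod) x) := by
      rw [List.map_cons, List.prod_cons, Module.End.mul_apply, LinearMap.sub_apply,
        Module.End.one_apply]
      abel
    rw [e]
    exact S.add_mem h1 h2

lemma range_le_ker_of_mul_eq_zero (A B : Module.End ℝ (Fin m → ℝ)) (h : A * B = 0) :
    LinearMap.range B ≤ LinearMap.ker A := by
  rintro x ⟨y, rfl⟩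
  rw [LinearMap.mem_ker, ← Module.End.mul_apply, h, LinearMap.zero_apply]

lemma piProd_eq_ascProd (j : ℕ) : piProd Q j = ascProd Q 0 j := by
  simp [piProd, ascProd]

end aux

theorem range_ker_Q_ascProd {m ν : ℕ} (Q : ℕ → Module.End ℝ (Fin m → ℝ))
    (hidem : ∀ i ≤ ν, Q i * Q i = Q i)
    (hind : ∀ i ≤ ν,
      (⨆ j ∈ Finset.range i, LinearMap.range (Q j)) ⊓ LinearMap.range (Q i) = ⊥)
    (hadm : ∀ i ≤ ν, ∀ j < i, Q i * Q j = 0) :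
    ∀ j ≤ ν, ∀ k < j,
      LinearMap.range (Q k * ascProd Q (k + 1) j) = LinearMap.range (Q k) ∧
      LinearMap.ker (Q k * ascProd Q (k + 1) j) =
        (⨆ i ∈ (Finset.range (j + 1)).erase k, LinearMap.range (Q i)) ⊔
          LinearMap.range (piProd Q j) := by
  intro j hj k hk
  set A := ascProd Q (k + 1) j with hA
  set T := Q k * A with hT
  set S : Submodule ℝ (Fin m → ℝ) :=
    (⨆ i ∈ (Finset.range (j + 1)).erase k, LinearMap.range (Q i)) ⊔
      LinearMap.range (piProd Q j) with hS
  -- basic facts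
  have hkν : k ≤ ν := le_trans (le_of_lt hk) hj
  have habsorb : A * Q k = Q k :=
    ascProd_mul_Q Q (k + 1) j k (fun t h1 h2 => hadm t (le_trans h2 hj) k (by omega))
  have hTQk : T * Q k = Q k := by
    rw [hT, mul_assoc, habsorb, hidem k hkν]
  -- T * Q i = 0 for i ≤ j, i ≠ k
  have hTQ : ∀ i, i ≤ j → i ≠ k → T * Q i = 0 := by
    intro i hij hik
    rcases lt_or_gt_of_ne hik with hlt | hgt
    · rw [hT, mul_assoc, ascProd_mul_Q Q (k + 1) j i
        (fun t h1 h2 => hadm t (le_trans h2 hj) i (by omega)),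
        hadm k hkν i hlt]
    · rw [hT, mul_assoc, ascProd_mul_Q_eq_zero Q (k + 1) j i hgt hij
        (hidem i (le_trans hij hj))
        (fun t h1 h2 => hadm t (le_trans h2 hj) i h1), mul_zero]
  -- T * A = T
  have hTA : T * A = T :=
    mul_ascProd Q T (k + 1) j (fun t h1 h2 => hTQ t h2 (by omega))
  -- R := P_0 * ... * P_{k-1}
  set R : Module.End ℝ (Fin m → ℝ) := ((List.range k).map (fun t => 1 - Q t)).prod with hR
  have hTR : T * R = T := by
    refine mul_prodP Q T _ (fun t ht => ?_)
    rw [List.mem_range] at ht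
    exact hTQ t (by omega) (by omega)
  -- Π_j = R * P_k * A
  have hPi : piProd Q j = R * ((1 - Q k) * A) := by
    rw [piProd_eq_ascProd, ascProd_split Q 0 k j (by omega) (le_of_lt hk), ← mul_assoc]
    congr 1
    rw [ascProd_last Q 0 k (by omega), hR]
    congr 1
    · congr 1
      refine List.map_congr_left (fun t ht => by rw [Nat.zero_add])
  -- T * Π_j = 0
  have hTPi : T * piProd Q j = 0 := by
    rw [hPi, ← mul_assoc, hTR, ← mul_assoc, mul_sub, mul_one, hTQk, sub_mul, hTA, ← hT,
      sub_self]
  constructor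
  · -- range
    apply le_antisymm
    · rintro x ⟨y, rfl⟩
      exact ⟨A y, rfl⟩
    · rintro x ⟨y, rfl⟩
      exact ⟨Q k y, by rw [← Module.End.mul_apply, hTQk]⟩
  · -- kernel
    apply le_antisymm
    · -- ker T ≤ S
      intro x hx
      rw [LinearMap.mem_ker] at hx
      have hx' : Q k (A x) = 0 := by rwa [← Module.End.mul_apply, ← hT]
      -- x = (x - A x) + (A x - R (A x)) + R (A x)
      have hdec : x = (x - A x) + ((A x) - R (A x)) + R (A x) := by abel
      have h1 : x - A x ∈ S := by
        rw [hA, ascProd_eq_prodP]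
        refine sub_prodP_mem Q S _ (fun i hi => ?_) x
        simp only [List.mem_map, List.mem_range] at hi
        obtain ⟨s, hs, rfl⟩ := hi
        refine le_trans ?_ le_sup_left
        exact le_iSup₂ (f := fun i _ => LinearMap.range (Q i)) (k + 1 + s)
          (Finset.mem_erase.mpr ⟨by omega, Finset.mem_range.mpr (by omega)⟩)
      have h2 : A x - R (A x) ∈ S := by
        rw [hR]
        refine sub_prodP_mem Q S _ (fun i hi => ?_) (A x)
        rw [List.mem_range] at hi
        refine le_trans ?_ le_sup_left
        exact le_iSup₂ (f := fun i _ => LinearMap.range (Q i)) i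
          (Finset.mem_erase.mpr ⟨by omega, Finset.mem_range.mpr (by omega)⟩)
      have h3 : R (A x) ∈ S := by
        have : piProd Q j x = R (A x) := by
          rw [hPi, Module.End.mul_apply, Module.End.mul_apply, LinearMap.sub_apply,
            Module.End.one_apply, hx', sub_zero]
        exact le_sup_right (α := Submodule ℝ (Fin m → ℝ)) ⟨x, this⟩
      rw [hdec]
      exact S.add_mem (S.add_mem h1 h2) h3
    · -- S ≤ ker T
      refine sup_le ?_ ?_
      · refine iSup₂_le (fun i hi => ?_)
        rw [Finset.mem_erase, Finset.mem_range] at hi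
        exact range_le_ker_of_mul_eq_zero _ _ (hTQ i (by omega) hi.1)
      · exact range_le_ker_of_mul_eq_zero _ _ hTPi
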